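/- Suppose π is an n-qubit permutation gate and m with 0 ≤ m ≤ n is such that π Xᵢ π⁻¹ ∈ 𝒫ₙ for all i = 1, …, m and π Zⱼ π⁻¹ ∈ 𝒫ₙ for all j = m+1, …, n. Then there exist Clifford permutation gates φ₁, φ₂ and a mismatch-free product μ of C*X gates such that π = φ₁ μ φ₂. -/

import Mathlib

open Matrix

/-- An `n`-qubit gate: a `2^n × 2^n` complex matrix with rows and columns indexed
by bitstrings `v ∈ 𝔽₂ⁿ`. -/
abbrev Gate (n : ℕ) := Matrix (Fin n → ZMod 2) (Fin n → ZMod 2) ℂ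

def IsUnitaryGate {n : ℕ} (U : Gate n) : Prop :=
  U ∈ Matrix.unitaryGroup (Fin n → ZMod 2) ℂ

/-- The Pauli group `𝒫ₙ`: all matrices `c · X^u Z^v` with `c ∈ {1, -1, i, -i}`,
which is exactly the set of matrices `c · P₁ ⊗ ⋯ ⊗ Pₙ` with `Pⱼ ∈ {I₂, X, Y, Z}`. -/
def PauliGroup (n : ℕ) : Set (Gate n) :=
  { P | ∃ (c : ℂ) (u v : Fin n → ZMod 2),
      (c = 1 ∨ c = -1 ∨ c = Complex.I ∨ c = -Complex.I) ∧
      P = Matrix.of fun a b =>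
        if a = b + u then c * (-1 : ℂ) ^ (∑ i, (v i * b i).val) else 0 }

/-- The Clifford hierarchy: `𝒞₁ = 𝒫ₙ`, and for `k ≥ 2`,
`𝒞ₖ = {U unitary : U P U† ∈ 𝒞ₖ₋₁ for all P ∈ 𝒫ₙ}`.  (`CliffordHierarchy n k` is `𝒞ₖ`.) -/
def CliffordHierarchy (n : ℕ) : ℕ → Set (Gate n)
  | 0 => PauliGroup n
  | 1 => PauliGroup n
  | k + 2 => { U | IsUnitaryGate U ∧
      ∀ P ∈ PauliGroup n, U * P * Uᴴ ∈ CliffordHierarchy n (k + 1) }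

/-- The permutation gate mapping `|v⟩` to `|σ v⟩`. -/
def permGate {n : ℕ} (σ : Equiv.Perm (Fin n → ZMod 2)) : Gate n :=
  Matrix.of fun a b => if a = σ b then 1 else 0

def IsPermGate {n : ℕ} (U : Gate n) : Prop := ∃ σ, U = permGate σ

def IsDiagonalGate {n : ℕ} (U : Gate n) : Prop :=
  IsUnitaryGate U ∧ ∀ a b, a ≠ b → U a b = 0

/-- A gate is semi-Clifford if it is `φ₁ d φ₂` with `φ₁, φ₂` Clifford and `d` a diagonal gate. -/
def IsSemiClifford {n : ℕ} (U : Gate n) : Prop :=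
  ∃ φ₁ d φ₂ : Gate n, φ₁ ∈ CliffordHierarchy n 2 ∧ φ₂ ∈ CliffordHierarchy n 2 ∧
    IsDiagonalGate d ∧ U = φ₁ * d * φ₂

def IsCliffordPerm {n : ℕ} (U : Gate n) : Prop :=
  IsPermGate U ∧ U ∈ CliffordHierarchy n 2

/-- Action of a `C*X` gate with control set `S` and target `t` on a bitstring. -/
def cxFun {n : ℕ} (S : Finset (Fin n)) (t : Fin n) (a : Fin n → ZMod 2) :
    Fin n → ZMod 2 :=
  Function.update a t (a t + ∏ i ∈ S, a i)

/-- The `C*X` gate with control set `S` and target `t`. -/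
def cxGate {n : ℕ} (S : Finset (Fin n)) (t : Fin n) : Gate n :=
  Matrix.of fun a b => if a = cxFun S t b then 1 else 0

/-- `μ` is the product of the `C*X` gates recorded in the list `l`
(each entry: control set and target, with the target not a control of the same gate). -/
def IsCXProduct {n : ℕ} (l : List (Finset (Fin n) × Fin n)) (μ : Gate n) : Prop :=
  (∀ g ∈ l, g.2 ∉ g.1) ∧ μ = (l.map fun g => cxGate g.1 g.2).prod

/-- A product of `C*X` gates is mismatch-free if no qubit occurs both as a target
of some gate and as a control of some gate. -/
def MismatchFree {n : ℕ} (l : List (Finset (Fin n) × Fin n)) : Prop :=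
  ∀ g ∈ l, ∀ g' ∈ l, g.2 ∉ g'.1

/-- The `X`-type gate `X^u`, mapping `|v⟩` to `|v + u⟩`. -/
def xGate {n : ℕ} (u : Fin n → ZMod 2) : Gate n :=
  Matrix.of fun a b => if a = b + u then 1 else 0

/-- The `Z`-type gate `Z^v`, multiplying `|a⟩` by `(-1)^(v·a)`. -/
def zGate {n : ℕ} (v : Fin n → ZMod 2) : Gate n :=
  Matrix.of fun a b => if a = b then (-1 : ℂ) ^ (∑ i, (v i * a i).val) else 0

namespace Aux

variable {n : ℕ}

abbrev V (n : ℕ) := Fin n → ZMod 2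

lemma zmod2_cases (x : ZMod 2) : x = 0 ∨ x = 1 := by revert x; decide

/-- `χ x = (-1)^x.val`. -/
noncomputable def chi (x : ZMod 2) : ℂ := (-1 : ℂ) ^ x.val

@[simp] lemma chi_zero : chi (0 : ZMod 2) = 1 := by simp [chi]

@[simp] lemma chi_one : chi (1 : ZMod 2) = -1 := by
  have : (1 : ZMod 2).val = 1 := rfl
  simp [chi, this]

lemma chi_add (x y : ZMod 2) : chi (x + y) = chi x * chi y := by
  have h2 : (1 + 1 : ZMod 2) = 0 := by decide
  rcases zmod2_cases x with hx | hx <;> rcases zmod2_cases y with hy | hy <;>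
    subst hx <;> subst hy <;> simp [h2]

lemma chi_ne_zero (x : ZMod 2) : chi x ≠ 0 := by
  rcases zmod2_cases x with h | h <;> subst h <;> simp

lemma chi_inj {x y : ZMod 2} (h : chi x = chi y) : x = y := by
  rcases zmod2_cases x with hx | hx <;> rcases zmod2_cases y with hy | hy <;>
    subst hx <;> subst hy <;> simp_all <;> norm_num at h

lemma chi_sum {ι : Type*} (s : Finset ι) (f : ι → ZMod 2) :
    chi (∑ i ∈ s, f i) = ∏ i ∈ s, chi (f i) := by
  classical
  induction s using Finset.induction with
  | empty => simp [chi]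
  | @insert _ _ h ih => rw [Finset.sum_insert h, Finset.prod_insert h, chi_add, ih]

lemma pow_val_sum (v b : V n) :
    (-1 : ℂ) ^ (∑ i, (v i * b i).val) = chi (∑ i, v i * b i) := by
  rw [chi_sum, ← Finset.prod_pow_eq_pow_sum]
  rfl

lemma permGate_mul (σ τ : Equiv.Perm (V n)) :
    permGate σ * permGate τ = permGate (τ.trans σ) := by
  ext a b
  simp only [permGate, Matrix.mul_apply, Matrix.of_apply]
  rw [Finset.sum_eq_single (τ b)]
  · simp
    congr
  · intro c _ hc
    simp [if_neg (by simpa [eq_comm] using hc)]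
  · simp

lemma permGate_one : permGate (Equiv.refl (V n)) = 1 := by
  ext a b
  simp [permGate, Matrix.one_apply, eq_comm]
  congr

lemma permGate_mul' (σ τ : Equiv.Perm (V n)) :
    permGate (σ * τ) = permGate σ * permGate τ := by
  rw [permGate_mul]; rfl

lemma permGate_conjTranspose (σ : Equiv.Perm (V n)) :
    (permGate σ)ᴴ = permGate σ.symm := by
  ext a b
  simp only [permGate, Matrix.conjTranspose_apply, Matrix.of_apply]
  by_cases h : b = σ a
  · simp [h]
  · rw [if_neg h, if_neg (by
      intro hc; exact h (by rw [hc]; simp))]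
    exact star_zero _

lemma permGate_unitary (σ : Equiv.Perm (V n)) : IsUnitaryGate (permGate σ) := by
  rw [IsUnitaryGate, Matrix.mem_unitaryGroup_iff]
  show permGate σ * (permGate σ)ᴴ = 1
  rw [permGate_conjTranspose, permGate_mul]
  have : (σ.symm.trans σ) = Equiv.refl (V n) := by
    ext x; simp
  rw [this, permGate_one]

lemma permGate_inv (σ : Equiv.Perm (V n)) : (permGate σ)⁻¹ = permGate σ.symm := by
  apply Matrix.inv_eq_right_inv
  rw [permGate_mul]
  have : (σ.symm.trans σ) = Equiv.refl (V n) := by ext x; simp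
  rw [this, permGate_one]

lemma conj_entry (σ : Equiv.Perm (V n)) (M : Gate n) (a b : V n) :
    (permGate σ * M * (permGate σ)ᴴ) a b = M (σ.symm a) (σ.symm b) := by
  rw [permGate_conjTranspose]
  have h1 : (permGate σ * M) a = fun d => M (σ.symm a) d := by
    funext d
    simp only [Matrix.mul_apply, permGate, Matrix.of_apply]
    rw [Finset.sum_eq_single (σ.symm a)]
    · simp
    · intro c _ hc
      rw [if_neg (by intro h; exact hc (by rw [h]; simp)), zero_mul]
    · simp
  rw [Matrix.mul_apply]
  simp only [h1]
  rw [Finset.sum_eq_single (σ.symm b)]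
  · simp [permGate]
  · intro c _ hc
    simp only [permGate, Matrix.of_apply]
    rw [if_neg hc, mul_zero]
  · simp

end Aux

namespace Aux
variable {n : ℕ}

lemma add_self (v : V n) : v + v = 0 := by
  funext i
  show v i + v i = 0
  rcases zmod2_cases (v i) with h | h <;> rw [h] <;> decide

lemma single_eq_ite (i : Fin n) :
    (Pi.single i (1 : ZMod 2) : V n) = fun j => if i = j then (1 : ZMod 2) else 0 := by
  funext j
  simp [Pi.single_apply, eq_comm]

lemma affine_functional (e : V n → ZMod 2) (he : ∀ x y, e (x+y) = e x + e y + e 0)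
    (b : V n) : e b = e 0 + ∑ i, (e (Pi.single i 1) + e 0) * b i := by
  classical
  have hz2 : ∀ x : ZMod 2, x + x = 0 := by decide
  set g : V n → ZMod 2 := fun x => e x + e 0 with hg
  have hgadd : ∀ x y, g (x + y) = g x + g y := by
    intro x y
    show e (x + y) + e 0 = (e x + e 0) + (e y + e 0)
    rw [he x y]; ring
  let G : V n →+ ZMod 2 := AddMonoidHom.mk' g hgadd
  have hb : b = ∑ i : Fin n, b i • Pi.single i (1 : ZMod 2) := by
    conv_lhs => rw [pi_eq_sum_univ b]
    refine Finset.sum_congr rfl fun i _ => ?_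
    rw [single_eq_ite i]
  have : g b = ∑ i : Fin n, g (b i • Pi.single i (1 : ZMod 2)) := by
    conv_lhs => rw [hb]
    exact map_sum G _ _
  have hsm : ∀ i, g (b i • Pi.single i (1 : ZMod 2)) = (e (Pi.single i 1) + e 0) * b i := by
    intro i
    rcases zmod2_cases (b i) with h | h <;> rw [h]
    · show g ((0 : ZMod 2) • _) = _
      rw [zero_smul, mul_zero]
      show e 0 + e 0 = 0
      exact hz2 _
    · rw [one_smul, mul_one]
  have he2 : e b = g b + e 0 := by
    simp only [hg]
    rw [add_assoc, hz2, add_zero]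
  rw [he2, this, Finset.sum_congr rfl (fun i _ => hsm i), add_comm]

lemma symm_affine (σ : Equiv.Perm (V n)) (h : ∀ x y, σ (x+y) = σ x + σ y + σ 0) :
    ∀ x y, σ.symm (x+y) = σ.symm x + σ.symm y + σ.symm 0 := by
  have h3 : ∀ a b c, σ (a + b + c) = σ a + σ b + σ c := by
    intro a b c
    rw [h (a+b) c, h a b]
    rw [show σ a + σ b + σ 0 + σ c + σ 0 = σ a + σ b + σ c + (σ 0 + σ 0) by ring, add_self,
      add_zero]
  intro x y
  apply σ.injective
  rw [Equiv.apply_symm_apply, h3, Equiv.apply_symm_apply, Equiv.apply_symm_apply,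
    Equiv.apply_symm_apply, add_zero]

lemma affine_clifford (σ : Equiv.Perm (V n)) (h : ∀ x y, σ (x+y) = σ x + σ y + σ 0) :
    permGate σ ∈ CliffordHierarchy n 2 := by
  show permGate σ ∈ CliffordHierarchy n (0 + 2)
  refine ⟨permGate_unitary σ, fun P hP => ?_⟩
  show permGate σ * P * (permGate σ)ᴴ ∈ PauliGroup n
  obtain ⟨c, u, v, hc, rfl⟩ := hP
  set d : V n → ZMod 2 := fun b => ∑ k, v k * (σ.symm b) k with hd
  have hdaff : ∀ x y, d (x + y) = d x + d y + d 0 := by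
    intro x y
    simp only [hd]
    rw [← Finset.sum_add_distrib, ← Finset.sum_add_distrib]
    refine Finset.sum_congr rfl fun k _ => ?_
    rw [symm_affine σ h x y]
    show v k * (σ.symm x k + σ.symm y k + σ.symm 0 k) = _
    ring
  refine ⟨c * chi (d 0), σ u + σ 0, fun i => d (Pi.single i 1) + d 0, ?_, ?_⟩
  · have := chi_ne_zero (d 0)
    rcases zmod2_cases (d 0) with h0 | h0 <;> rw [h0] <;>
      rcases hc with h1 | h1 | h1 | h1 <;> rw [h1] <;> simp [Complex.ext_iff] <;> norm_num
  · ext a b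
    rw [conj_entry]
    show (if σ.symm a = σ.symm b + u then c * (-1:ℂ) ^ (∑ i, (v i * (σ.symm b) i).val) else 0)
      = if a = b + (σ u + σ 0) then
          (c * chi (d 0)) * (-1:ℂ) ^ (∑ i, ((d (Pi.single i 1) + d 0) * b i).val) else 0
    have hline : σ (σ.symm b + u) = b + (σ u + σ 0) := by
      rw [h (σ.symm b) u, Equiv.apply_symm_apply]; ring
    have hiff : σ.symm a = σ.symm b + u ↔ a = b + (σ u + σ 0) := by
      constructor
      · intro hh
        rw [← hline, ← hh, Equiv.apply_symm_apply]
      · intro hh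
        apply σ.injective
        rw [Equiv.apply_symm_apply, hline, hh]
    by_cases hcond : a = b + (σ u + σ 0)
    · rw [if_pos (hiff.mpr hcond), if_pos hcond]
      rw [pow_val_sum, pow_val_sum]
      have : (∑ i, v i * (σ.symm b) i) = d b := rfl
      rw [this]
      have hdb : d b = d 0 + ∑ i, (d (Pi.single i 1) + d 0) * b i :=
        affine_functional d hdaff b
      rw [hdb, chi_add, chi_sum]
      have : (∑ i, (d (Pi.single i 1) + d 0) * b i) =
          ∑ i, ((fun i => d (Pi.single i 1) + d 0) i * b i) := rfl
      rw [chi_sum]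
      ring
    · rw [if_neg (fun hh => hcond (hiff.mp hh)), if_neg hcond]

end Aux

namespace Aux
variable {n : ℕ}

lemma zmod2_add_add (x y : ZMod 2) : x + y + y = x := by revert x y; decide

lemma cxFun_invol {S : Finset (Fin n)} {t : Fin n} (h : t ∉ S) :
    Function.Involutive (cxFun S t) := by
  intro a
  unfold cxFun
  have hup : ∀ i ∈ S, Function.update a t (a t + ∏ i ∈ S, a i) i = a i := by
    intro i hi
    exact Function.update_of_ne (fun he => h (by rw [he] at hi; exact hi)) _ _
  rw [Finset.prod_congr rfl hup, Function.update_self]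
  rw [Function.update_idem, zmod2_add_add, Function.update_eq_self]

def cxPerm (S : Finset (Fin n)) (t : Fin n) : Equiv.Perm (V n) :=
  if h : t ∈ S then Equiv.refl _
  else Function.Involutive.toPerm (cxFun S t) (cxFun_invol h)

lemma cxPerm_apply {S : Finset (Fin n)} {t : Fin n} (h : t ∉ S) (a : V n) :
    cxPerm S t a = cxFun S t a := by
  rw [cxPerm, dif_neg h]; rfl

lemma cxGate_eq {S : Finset (Fin n)} {t : Fin n} (h : t ∉ S) :
    cxGate S t = permGate (cxPerm S t) := by
  ext a b
  simp only [cxGate, permGate, Matrix.of_apply, cxPerm_apply h]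

lemma permGate_listProd (l : List (Equiv.Perm (V n))) :
    permGate l.prod = (l.map permGate).prod := by
  induction l with
  | nil => exact permGate_one
  | cons a l ih => rw [List.prod_cons, permGate_mul', ih, List.map_cons, List.prod_cons]

def Dfun (l : List (Finset (Fin n) × Fin n)) (a : V n) : V n :=
  fun j => (l.map (fun p => if p.2 = j then ∏ i ∈ p.1, a i else 0)).sum

lemma Dfun_high {m : ℕ} (l : List (Finset (Fin n) × Fin n))
    (hT : ∀ p ∈ l, (p.2 : ℕ) < m) (a : V n) (j : Fin n) (hj : m ≤ (j : ℕ)) :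
    Dfun l a j = 0 := by
  induction l with
  | nil => rfl
  | cons p l ih =>
    show (if p.2 = j then _ else 0) + Dfun l a j = 0
    rw [if_neg (fun he => by
        have h1 := hT p (List.mem_cons_self : p ∈ p :: l); rw [he] at h1; omega),
      ih (fun q hq => hT q (List.mem_cons_of_mem p hq)), add_zero]

lemma prod_cxPerm_apply {m : ℕ} (l : List (Finset (Fin n) × Fin n))
    (hT : ∀ p ∈ l, (p.2 : ℕ) < m) (hC : ∀ p ∈ l, ∀ i ∈ p.1, m ≤ (i : ℕ)) (a : V n) :
    ((l.map (fun p => cxPerm p.1 p.2)).prod) a = a + Dfun l a := by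
  induction l with
  | nil => funext j; show a j = a j + 0; rw [add_zero]
  | cons p l ih =>
    have hT' : ∀ q ∈ l, (q.2 : ℕ) < m := fun q hq => hT q (List.mem_cons_of_mem p hq)
    have hC' : ∀ q ∈ l, ∀ i ∈ q.1, m ≤ (i : ℕ) := fun q hq => hC q (List.mem_cons_of_mem p hq)
    have hpt : p.2 ∉ p.1 := by
      intro hin
      have h1 := hT p (List.mem_cons_self : p ∈ p :: l)
      have h2 := hC p (List.mem_cons_self : p ∈ p :: l) p.2 hin
      omega
    rw [List.map_cons, List.prod_cons]
    show cxPerm p.1 p.2 (((l.map (fun p => cxPerm p.1 p.2)).prod) a) = _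
    rw [ih hT' hC', cxPerm_apply hpt]
    set b : V n := a + Dfun l a with hb
    have hbS : ∀ i ∈ p.1, b i = a i := by
      intro i hi
      show a i + Dfun l a i = a i
      rw [Dfun_high l hT' a i (hC p (List.mem_cons_self : p ∈ p :: l) i hi), add_zero]
    unfold cxFun
    funext j
    by_cases hj : j = p.2
    · rw [hj, Function.update_self]
      show b p.2 + ∏ i ∈ p.1, b i = a p.2 + Dfun (p :: l) a p.2
      rw [Finset.prod_congr rfl hbS]
      show a p.2 + Dfun l a p.2 + ∏ i ∈ p.1, a i =
        a p.2 + ((if p.2 = p.2 then ∏ i ∈ p.1, a i else 0) + Dfun l a p.2)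
      rw [if_pos rfl]; ring
    · rw [Function.update_of_ne hj]
      show a j + Dfun l a j = a j + ((if p.2 = j then _ else 0) + Dfun l a j)
      rw [if_neg (fun he => hj he.symm), zero_add]

end Aux

namespace Aux
variable {n : ℕ}

lemma sum_flatMap' {α : Type*} (ts : List α) (h : α → List (ZMod 2)) :
    (ts.flatMap h).sum = (ts.map (fun t => (h t).sum)).sum := by
  induction ts with
  | nil => rfl
  | cons t ts ih => rw [List.flatMap_cons, List.sum_append, ih, List.map_cons, List.sum_cons]

lemma anf (C : Finset (Fin n)) (F : V n → ZMod 2)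
    (hF : ∀ a b : V n, (∀ i ∈ C, a i = b i) → F a = F b) :
    ∃ L : List (Finset (Fin n)), (∀ S ∈ L, S ⊆ C) ∧
      ∀ a, F a = (L.map (fun S => ∏ i ∈ S, a i)).sum := by
  classical
  induction C using Finset.induction generalizing F with
  | empty =>
    have hconst : ∀ a, F a = F 0 := fun a => hF a 0 (by simp)
    rcases zmod2_cases (F 0) with h0 | h0
    · exact ⟨[], by simp, fun a => by rw [hconst a, h0]; rfl⟩
    · refine ⟨[∅], by simp, fun a => ?_⟩
      rw [hconst a, h0]
      simp
  | @insert i C' hi ih =>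
    set F₀ : V n → ZMod 2 := fun a => F (Function.update a i 0) with hF0
    set F₁ : V n → ZMod 2 := fun a => F (Function.update a i 1) + F (Function.update a i 0)
      with hF1
    have hagree : ∀ (c : ZMod 2) (a b : V n), (∀ j ∈ C', a j = b j) →
        F (Function.update a i c) = F (Function.update b i c) := by
      intro c a b hab
      apply hF
      intro j hj
      rcases Finset.mem_insert.mp hj with hj | hj
      · subst hj; simp
      · have hji : j ≠ i := fun he => hi (he ▸ hj)
        rw [Function.update_of_ne hji, Function.update_of_ne hji]
        exact hab j hj
    obtain ⟨L₀, hL₀C, hL₀⟩ := ih F₀ (fun a b hab => hagree 0 a b hab)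
    obtain ⟨L₁, hL₁C, hL₁⟩ := ih F₁ (fun a b hab => by
      show F (Function.update a i 1) + F (Function.update a i 0) = _
      rw [hagree 1 a b hab, hagree 0 a b hab])
    refine ⟨L₀ ++ L₁.map (insert i), ?_, ?_⟩
    · intro S hS
      rcases List.mem_append.mp hS with hS | hS
      · exact (hL₀C S hS).trans (Finset.subset_insert i C')
      · obtain ⟨S', hS', rfl⟩ := List.mem_map.mp hS
        exact Finset.insert_subset_insert i (hL₁C S' hS')
    · intro a
      rw [List.map_append, List.sum_append, List.map_map]
      have hmon : ∀ S' ∈ L₁, ((fun S => ∏ j ∈ S, a j) ∘ insert i) S' =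
          a i * ∏ j ∈ S', a j := by
        intro S' hS'
        have : i ∉ S' := fun hin => hi (hL₁C S' hS' hin)
        simp [Finset.prod_insert this]
      rw [List.map_congr_left hmon]
      rw [List.sum_map_mul_left L₁ (fun S' => ∏ j ∈ S', a j) (a i), ← hL₀ a, ← hL₁ a]
      rcases zmod2_cases (a i) with hai | hai
      · have hupd : Function.update a i 0 = a := by rw [← hai, Function.update_eq_self]
        rw [hai, hF0]
        show F a = F (Function.update a i 0) + 0 * F₁ a
        rw [hupd, zero_mul, add_zero]
      · have hupd : Function.update a i 1 = a := by rw [← hai, Function.update_eq_self]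
        rw [hai, one_mul]
        show F a = F (Function.update a i 0) +
          (F (Function.update a i 1) + F (Function.update a i 0))
        rw [hupd]
        have : ∀ x y : ZMod 2, x = y + (x + y) := by decide
        exact this _ _

lemma sum_ite_nodup (ts : List (Fin n)) (hnd : ts.Nodup) (f : Fin n → ZMod 2) (j : Fin n) :
    (ts.map (fun t => if t = j then f t else 0)).sum = if j ∈ ts then f j else 0 := by
  induction ts with
  | nil => simp
  | cons t ts ih =>
    rw [List.map_cons, List.sum_cons, ih (List.nodup_cons.mp hnd).2]
    by_cases hj : t = j
    · subst hj
      rw [if_pos rfl, if_pos (List.mem_cons_self : t ∈ t :: ts),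
        if_neg (fun h => (List.nodup_cons.mp hnd).1 h), add_zero]
    · rw [if_neg hj]
      by_cases hj2 : j ∈ ts
      · rw [if_pos hj2, if_pos (List.mem_cons_of_mem t hj2), zero_add]
      · rw [if_neg hj2, if_neg (fun h => by
          rcases List.mem_cons.mp h with h | h
          · exact hj h.symm
          · exact hj2 h), zero_add]

lemma cx_decomposition (m : ℕ) (g : V n → V n)
    (hg1 : ∀ x (t : Fin n), m ≤ (t : ℕ) → g x t = 0)
    (hg2 : ∀ x y : V n, (∀ j : Fin n, m ≤ (j : ℕ) → x j = y j) → g x = g y)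
    (τ : Equiv.Perm (V n)) (hτ : ∀ a, τ a = a + g a) :
    ∃ l : List (Finset (Fin n) × Fin n), IsCXProduct l (permGate τ) ∧ MismatchFree l := by
  classical
  set C : Finset (Fin n) := Finset.univ.filter (fun j : Fin n => m ≤ (j : ℕ)) with hC
  have hanf : ∀ t : Fin n, ∃ L : List (Finset (Fin n)), (∀ S ∈ L, S ⊆ C) ∧
      ∀ a, g a t = (L.map (fun S => ∏ i ∈ S, a i)).sum := by
    intro t
    apply anf C (fun a => g a t)
    intro a b hab
    have : g a = g b := hg2 a b (fun j hj => hab j (by simp [hC, hj]))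
    rw [this]
  choose L hLC hLval using hanf
  set ts : List (Fin n) := (List.finRange n).filter (fun t => decide ((t : ℕ) < m)) with hts
  set l : List (Finset (Fin n) × Fin n) :=
    ts.flatMap (fun t => (L t).map (fun S => (S, t))) with hl
  have hmem : ∀ p ∈ l, ((p.2 : ℕ) < m ∧ p.1 ⊆ C) := by
    intro p hp
    rw [hl] at hp
    obtain ⟨t, ht, hp2⟩ := List.mem_flatMap.mp hp
    obtain ⟨S, hS, rfl⟩ := List.mem_map.mp hp2
    refine ⟨?_, hLC t S hS⟩
    have := (List.mem_filter.mp ht).2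
    simpa using this
  have hT : ∀ p ∈ l, (p.2 : ℕ) < m := fun p hp => (hmem p hp).1
  have hCC : ∀ p ∈ l, ∀ i ∈ p.1, m ≤ (i : ℕ) := by
    intro p hp i hi
    have := (hmem p hp).2 hi
    rw [hC] at this
    simpa using (Finset.mem_filter.mp this).2
  have hnotin : ∀ p ∈ l, p.2 ∉ p.1 := by
    intro p hp hin
    have := hCC p hp p.2 hin
    have := hT p hp
    omega
  refine ⟨l, ⟨hnotin, ?_⟩, ?_⟩
  · have hgates : (l.map fun p => cxGate p.1 p.2) = (l.map fun p => cxPerm p.1 p.2).map permGate := by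
      rw [List.map_map]
      exact List.map_congr_left (fun p hp => cxGate_eq (hnotin p hp))
    rw [hgates, ← permGate_listProd]
    have hτeq : τ = (l.map (fun p => cxPerm p.1 p.2)).prod := by
      apply Equiv.ext
      intro a
      rw [hτ a, prod_cxPerm_apply (m := m) l hT hCC a]
      congr 1
      funext j
      show g a j = Dfun l a j
      by_cases hjm : (j : ℕ) < m
      · rw [hl]
        show g a j = ((ts.flatMap (fun t => (L t).map (fun S => (S, t)))).map
          (fun p => if p.2 = j then ∏ i ∈ p.1, a i else 0)).sum
        rw [List.map_flatMap]
        have heach : ∀ t, (((L t).map (fun S => (S, t))).map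
            (fun p => if p.2 = j then ∏ i ∈ p.1, a i else 0)).sum
            = if t = j then g a t else 0 := by
          intro t
          rw [List.map_map]
          by_cases htj : t = j
          · rw [if_pos htj, hLval t a]
            congr 1
            exact List.map_congr_left (fun S hS => by simp [htj])
          · rw [if_neg htj]
            have : ∀ S ∈ L t, ((fun p : Finset (Fin n) × Fin n =>
                if p.2 = j then ∏ i ∈ p.1, a i else 0) ∘ (fun S => (S, t))) S = 0 := by
              intro S hS
              simp [htj]
            rw [List.map_congr_left this]
            simp [List.sum_eq_zero]
        rw [sum_flatMap', List.map_congr_left (fun t _ => heach t), sum_ite_nodup ts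
          ((List.nodup_finRange n).filter _) (fun t => g a t) j]
        rw [if_pos (by
          rw [hts]
          refine List.mem_filter.mpr ⟨List.mem_finRange j, by simpa using hjm⟩)]
      · rw [hg1 a j (by omega), Dfun_high l hT a j (by omega)]
    rw [hτeq]
  · intro p hp q hq hin
    have := hCC q hq p.2 hin
    have := hT p hp
    omega
end Aux

namespace Aux
variable {n : ℕ}

lemma xGate_eq (u : V n) : xGate u = permGate (Equiv.addRight u) := rfl

lemma perm_pauli_translate (ρ : Equiv.Perm (V n)) (hmem : permGate ρ ∈ PauliGroup n) :
    ∃ w, ∀ b, ρ b = b + w := by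
  obtain ⟨c, u, v, hc, heq⟩ := hmem
  refine ⟨u, fun b => ?_⟩
  have h1 := congrArg (fun M : Gate n => M (ρ b) b) heq
  simp only [permGate, Matrix.of_apply, if_pos rfl] at h1
  by_cases h : ρ b = b + u
  · exact h
  · rw [if_neg h] at h1
    exact absurd h1 one_ne_zero

lemma conj_entry' (σ : Equiv.Perm (V n)) (M : Gate n) (a b : V n) :
    (permGate σ * M * permGate σ.symm) a b = M (σ.symm a) (σ.symm b) := by
  rw [← permGate_conjTranspose, conj_entry]

lemma single_dot_val (j : Fin n) (x : V n) :
    ∑ i, ((Pi.single j 1 : V n) i * x i).val = (x j).val := by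
  have h : ∀ i, ((Pi.single j 1 : V n) i * x i).val = if i = j then (x j).val else 0 := by
    intro i
    rw [single_eq_ite j]
    by_cases hij : i = j
    · subst hij; simp
    · have hji : ¬ j = i := fun h => hij h.symm
      simp [hij, hji]
  rw [Finset.sum_congr rfl (fun i _ => h i), Finset.sum_ite_eq' Finset.univ j
    (fun _ => (x j).val), if_pos (Finset.mem_univ j)]

lemma zconj_linear (σ : Equiv.Perm (V n)) (j : Fin n)
    (hmem : permGate σ * zGate (Pi.single j 1) * permGate σ.symm ∈ PauliGroup n) :
    ∃ vj : V n, ∀ a, (σ.symm a) j = (∑ i, vj i * a i) + (σ.symm 0) j := by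
  obtain ⟨c, w, v', hc, heq⟩ := hmem
  have hent : ∀ a b : V n, zGate (Pi.single j 1) (σ.symm a) (σ.symm b) =
      (if a = b + w then c * (-1 : ℂ) ^ (∑ i, (v' i * b i).val) else 0) := by
    intro a b
    have h := conj_entry' σ (zGate (Pi.single j 1)) a b
    rw [heq] at h
    rw [← h]
    rfl
  have hdiag : ∀ a : V n, zGate (Pi.single j 1) (σ.symm a) (σ.symm a) =
      chi ((σ.symm a) j) := by
    intro a
    show (if σ.symm a = σ.symm a then (-1:ℂ) ^ (∑ i, ((Pi.single j 1 : V n) i * (σ.symm a) i).val) else 0) = _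
    rw [if_pos rfl, single_dot_val]
    rfl
  have hw : w = 0 := by
    by_contra hw
    have h0 := hent 0 0
    rw [hdiag 0, if_neg (by
      intro h
      exact hw (by rw [zero_add] at h; exact h.symm))] at h0
    exact chi_ne_zero _ h0
  subst hw
  have hval : ∀ a : V n, chi ((σ.symm a) j) = c * chi (∑ i, v' i * a i) := by
    intro a
    have h1 := hent a a
    rw [hdiag a, if_pos (by rw [add_zero]), pow_val_sum] at h1
    exact h1
  have hc0 : c = chi ((σ.symm 0) j) := by
    have h1 := hval 0
    rw [show (∑ i, v' i * (0:V n) i) = 0 by simp, chi_zero, mul_one] at h1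
    exact h1.symm
  refine ⟨v', fun a => ?_⟩
  apply chi_inj
  rw [hval a, hc0, ← chi_add, add_comm]

end Aux

namespace Aux
variable {n : ℕ}

def Hf (m : ℕ) (x : V n) : V n := fun j => if m ≤ (j : ℕ) then x j else 0
def Lof (m : ℕ) (x : V n) : V n := fun j => if m ≤ (j : ℕ) then 0 else x j
def Lf (m : ℕ) (u : Fin n → V n) (x : V n) : V n :=
  ∑ i : Fin n, if (i : ℕ) < m then x i • u i else 0
def Rf (m : ℕ) (v : Fin n → V n) (x : V n) : V n :=
  fun j => if m ≤ (j : ℕ) then ∑ i, v j i * x i else 0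

lemma Hf_add (m : ℕ) (x y : V n) : Hf m (x + y) = Hf m x + Hf m y := by
  funext j; simp only [Hf, Pi.add_apply]
  by_cases h : m ≤ (j : ℕ) <;> simp [h]

lemma Lof_add (m : ℕ) (x y : V n) : Lof m (x + y) = Lof m x + Lof m y := by
  funext j; simp only [Lof, Pi.add_apply]
  by_cases h : m ≤ (j : ℕ) <;> simp [h]

lemma Hf_add_Lof (m : ℕ) (x : V n) : Hf m x + Lof m x = x := by
  funext j; simp only [Hf, Lof, Pi.add_apply]
  by_cases h : m ≤ (j : ℕ) <;> simp [h]

lemma Hf_Hf (m : ℕ) (x : V n) : Hf m (Hf m x) = Hf m x := by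
  funext j; simp only [Hf]
  by_cases h : m ≤ (j : ℕ) <;> simp [h]

lemma Hf_zero (m : ℕ) : Hf m (0 : V n) = 0 := by
  funext j; simp [Hf]

lemma Lof_zero (m : ℕ) : Lof m (0 : V n) = 0 := by
  funext j; simp [Lof]

lemma Lf_zero (m : ℕ) (u : Fin n → V n) : Lf m u 0 = 0 := by
  simp [Lf]

lemma Lf_add (m : ℕ) (u : Fin n → V n) (x y : V n) :
    Lf m u (x + y) = Lf m u x + Lf m u y := by
  unfold Lf
  rw [← Finset.sum_add_distrib]
  refine Finset.sum_congr rfl fun i _ => ?_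
  by_cases h : (i : ℕ) < m
  · simp only [if_pos h, Pi.add_apply, add_smul]
  · simp [h]

lemma Rf_add (m : ℕ) (v : Fin n → V n) (x y : V n) :
    Rf m v (x + y) = Rf m v x + Rf m v y := by
  funext j
  simp only [Rf, Pi.add_apply]
  by_cases h : m ≤ (j : ℕ)
  · simp only [if_pos h, ← Finset.sum_add_distrib]
    exact Finset.sum_congr rfl fun i _ => by ring
  · simp [h]

def Rlin (m : ℕ) (v : Fin n → V n) : V n →ₗ[ZMod 2] V n where
  toFun := Rf m v
  map_add' := Rf_add m v
  map_smul' := by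
    intro c x
    funext j
    simp only [Rf, RingHom.id_apply, Pi.smul_apply, smul_eq_mul]
    by_cases h : m ≤ (j : ℕ)
    · simp only [if_pos h, Finset.mul_sum]
      exact Finset.sum_congr rfl fun i _ => by ring
    · simp [h]

lemma eq_of_add_eq_zero' (a b : V n) (h : a + b = 0) : a = b :=
  calc a = a + (b + b) := by rw [add_self, add_zero]
  _ = (a + b) + b := by rw [add_assoc]
  _ = 0 + b := by rw [h]
  _ = b := zero_add b

lemma low_translate (m : ℕ) (σ : Equiv.Perm (V n)) (u : Fin n → V n)
    (hu : ∀ i : Fin n, (i : ℕ) < m → ∀ a, σ (a + Pi.single i 1) = σ a + u i) :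
    ∀ x : V n, (∀ i, x i ≠ 0 → (i : ℕ) < m) → ∀ b, σ (b + x) = σ b + Lf m u x := by
  have key : ∀ s : Finset (Fin n), ∀ x : V n, (∀ i, x i ≠ 0 → i ∈ s) →
      (∀ i, x i ≠ 0 → (i : ℕ) < m) → ∀ b, σ (b + x) = σ b + Lf m u x := by
    intro s
    induction s using Finset.induction with
    | empty =>
      intro x hs _ b
      have hx0 : x = 0 := funext fun i => by
        by_contra h; exact absurd (hs i h) (Finset.notMem_empty i)
      rw [hx0, add_zero, Lf_zero, add_zero]
    | @insert i s hi ih =>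
      intro x hs hm b
      by_cases hxi : x i = 0
      · refine ih x (fun i' h' => ?_) hm b
        rcases Finset.mem_insert.mp (hs i' h') with h | h
        · exact absurd (h ▸ hxi) h'
        · exact h
      · have hxi1 : x i = 1 := by
          rcases zmod2_cases (x i) with h | h
          · exact absurd h hxi
          · exact h
        have him : (i : ℕ) < m := hm i hxi
        set x' := Function.update x i 0 with hx'
        have hxd : x = x' + Pi.single i 1 := by
          funext i'
          show x i' = x' i' + (Pi.single i 1 : V n) i'
          by_cases h : i' = i
          · subst h
            rw [hx', Function.update_self, Pi.single_eq_same, zero_add, hxi1]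
          · rw [hx', Function.update_of_ne h, Pi.single_eq_of_ne h, add_zero]
        have hLf : Lf m u x = Lf m u x' + u i := by
          unfold Lf
          rw [← Finset.sum_erase_add _ _ (Finset.mem_univ i),
            ← Finset.sum_erase_add _ _ (Finset.mem_univ i)]
          have hcong : ∀ i' ∈ Finset.univ.erase i,
              (if (i' : ℕ) < m then x i' • u i' else 0)
              = (if (i' : ℕ) < m then x' i' • u i' else 0) := by
            intro i' hi'
            rw [hx', Function.update_of_ne (Finset.mem_erase.mp hi').1]
          rw [Finset.sum_congr rfl hcong, if_pos him, if_pos him, hx',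
            Function.update_self, hxi1, one_smul, zero_smul, add_zero]
        have hsup : ∀ i', x' i' ≠ 0 → i' ∈ s := by
          intro i' h'
          have hne : i' ≠ i := by
            intro he
            rw [hx', he, Function.update_self] at h'
            exact h' rfl
          rw [hx', Function.update_of_ne hne] at h'
          rcases Finset.mem_insert.mp (hs i' h') with h | h
          · exact absurd h hne
          · exact h
        have hm' : ∀ i', x' i' ≠ 0 → (i' : ℕ) < m := by
          intro i' h'
          have hne : i' ≠ i := by
            intro he
            rw [hx', he, Function.update_self] at h'
            exact h' rfl
          rw [hx', Function.update_of_ne hne] at h'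
          exact hm i' h'
        calc σ (b + x) = σ ((b + x') + Pi.single i 1) := by rw [hxd, add_assoc]
        _ = σ (b + x') + u i := hu i him (b + x')
        _ = σ b + Lf m u x' + u i := by rw [ih x' hsup hm' b]
        _ = σ b + Lf m u x := by rw [hLf, add_assoc]
  exact fun x hm b => key Finset.univ x (fun i _ => Finset.mem_univ i) hm b

end Aux

namespace Aux
variable {n : ℕ}

theorem main_decomp (m : ℕ) (σ : Equiv.Perm (V n)) (u : Fin n → V n)
    (hu : ∀ i : Fin n, (i : ℕ) < m → ∀ a, σ (a + Pi.single i 1) = σ a + u i)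
    (v : Fin n → V n)
    (hv : ∀ j : Fin n, m ≤ (j : ℕ) → ∀ a, (σ.symm a) j = (∑ i, v j i * a i) + (σ.symm 0) j) :
    ∃ (φ₁ φ₂ μ : Gate n) (l : List (Finset (Fin n) × Fin n)),
      IsCliffordPerm φ₁ ∧ IsCliffordPerm φ₂ ∧ IsCXProduct l μ ∧ MismatchFree l ∧
      permGate σ = φ₁ * μ * φ₂ := by
  classical
  set cvec : V n := Hf m (σ.symm 0) with hcvec
  -- decomposition of σ
  have hdec : ∀ a, σ a = σ (Hf m a) + Lf m u (Lof m a) := by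
    intro a
    conv_lhs => rw [← Hf_add_Lof m a]
    exact low_translate m σ u hu (Lof m a)
      (fun i h => by
        by_contra hle
        exact h (by simp [Lof, Nat.le_of_not_lt hle]))
      (Hf m a)
  -- condition B
  have hB : ∀ a, Hf m (σ.symm a) = Rf m v a + cvec := by
    intro a
    funext j
    show Hf m (σ.symm a) j = Rf m v a j + cvec j
    by_cases h : m ≤ (j : ℕ)
    · show (if m ≤ (j:ℕ) then (σ.symm a) j else 0) =
        (if m ≤ (j:ℕ) then ∑ i, v j i * a i else 0) + (if m ≤ (j:ℕ) then (σ.symm 0) j else 0)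
      rw [if_pos h, if_pos h, if_pos h]
      exact hv j h a
    · show (if m ≤ (j:ℕ) then (σ.symm a) j else 0) =
        (if m ≤ (j:ℕ) then ∑ i, v j i * a i else 0) + (if m ≤ (j:ℕ) then (σ.symm 0) j else 0)
      rw [if_neg h, if_neg h, if_neg h, add_zero]
  have hB' : ∀ a, Rf m v a = Hf m (σ.symm a) + cvec := by
    intro a
    rw [hB a, add_assoc, add_self, add_zero]
  have hHcvec : Hf m cvec = cvec := Hf_Hf m _
  -- range of Rlin contains all high vectors
  have hHrange : ∀ y, Hf m y ∈ LinearMap.range (Rlin m v) := by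
    intro y
    refine ⟨σ (Hf m y + cvec), ?_⟩
    show Rf m v (σ (Hf m y + cvec)) = Hf m y
    rw [hB', Equiv.symm_apply_apply, Hf_add, Hf_Hf, hHcvec, add_assoc, add_self, add_zero]
  obtain ⟨s', hs'⟩ := LinearMap.exists_rightInverse_of_surjective
    (Rlin m v).rangeRestrict (LinearMap.range_rangeRestrict _)
  set sfun : V n → V n := fun y => (s' ⟨Hf m y, hHrange y⟩ : V n) with hsfun
  have hsR : ∀ y, Rf m v (sfun y) = Hf m y := by
    intro y
    have h2 : (Rlin m v).rangeRestrict (s' ⟨Hf m y, hHrange y⟩) = ⟨Hf m y, hHrange y⟩ := by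
      rw [← LinearMap.comp_apply, hs']; rfl
    have h3 := congrArg Subtype.val h2
    rwa [LinearMap.rangeRestrict, LinearMap.codRestrict_apply] at h3
  have hsadd : ∀ x y, sfun (x + y) = sfun x + sfun y := by
    intro x y
    show (s' ⟨Hf m (x+y), _⟩ : V n) = (s' ⟨Hf m x, _⟩ : V n) + (s' ⟨Hf m y, _⟩ : V n)
    have : (⟨Hf m (x+y), hHrange (x+y)⟩ : LinearMap.range (Rlin m v))
        = ⟨Hf m x, hHrange x⟩ + ⟨Hf m y, hHrange y⟩ := by
      apply Subtype.ext
      show Hf m (x + y) = Hf m x + Hf m y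
      exact Hf_add m x y
    rw [this, map_add]
  -- yfun and g
  set yfun : V n → V n := fun x => σ (Hf m x) + sfun (Hf m x + cvec) with hyfun
  have hy0 : ∀ x, Rf m v (yfun x) = 0 := by
    intro x
    show Rf m v (σ (Hf m x) + sfun (Hf m x + cvec)) = 0
    rw [Rf_add, hB', Equiv.symm_apply_apply, Hf_Hf, hsR, Hf_add, Hf_Hf, hHcvec, add_self]
  have hker : ∀ y, Rf m v y = 0 → Lf m u (Lof m (σ.symm 0) + Lof m (σ.symm y)) = y := by
    intro y hy
    have hσc : σ cvec = Lf m u (Lof m (σ.symm 0)) := by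
      have h := hdec (σ.symm 0)
      rw [Equiv.apply_symm_apply] at h
      exact eq_of_add_eq_zero' _ _ h.symm
    have hHy : Hf m (σ.symm y) = cvec := by rw [hB y, hy, zero_add]
    have h := hdec (σ.symm y)
    rw [Equiv.apply_symm_apply, hHy, hσc] at h
    rw [Lf_add, ← h]
  set g : V n → V n := fun x => Lof m (σ.symm 0) + Lof m (σ.symm (yfun x)) with hg
  have hLg : ∀ x, Lf m u (g x) = yfun x := fun x => hker _ (hy0 x)
  have hg1 : ∀ x (t : Fin n), m ≤ (t : ℕ) → g x t = 0 := by
    intro x t ht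
    show Lof m (σ.symm 0) t + Lof m (σ.symm (yfun x)) t = 0
    simp [Lof, ht]
  have hgH : ∀ x y : V n, (∀ j : Fin n, m ≤ (j : ℕ) → x j = y j) → g x = g y := by
    intro x y hxy
    have hH : Hf m x = Hf m y := by
      funext j
      show (if m ≤ (j:ℕ) then x j else 0) = (if m ≤ (j:ℕ) then y j else 0)
      by_cases h : m ≤ (j : ℕ)
      · rw [if_pos h, if_pos h, hxy j h]
      · rw [if_neg h, if_neg h]
    show Lof m (σ.symm 0) + Lof m (σ.symm (σ (Hf m x) + sfun (Hf m x + cvec)))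
      = Lof m (σ.symm 0) + Lof m (σ.symm (σ (Hf m y) + sfun (Hf m y + cvec)))
    rw [hH]
  -- the involution τ
  have hinv : Function.Involutive (fun a => a + g a) := by
    intro a
    show a + g a + g (a + g a) = a
    have : g (a + g a) = g a := by
      apply (hgH _ _ _).symm
      intro j hj
      show a j = a j + g a j
      rw [hg1 a j hj, add_zero]
    rw [this, add_assoc, add_self, add_zero]
  set τ : Equiv.Perm (V n) := hinv.toPerm _ with hτdef
  have hτ : ∀ a, τ a = a + g a := fun a => rfl
  set α : Equiv.Perm (V n) := τ.trans σ with hαdef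
  -- formula for α
  have hHg : ∀ x, Hf m (g x) = 0 := by
    intro x
    funext j
    show (if m ≤ (j:ℕ) then g x j else 0) = 0
    by_cases h : m ≤ (j : ℕ)
    · rw [if_pos h, hg1 x j h]
    · rw [if_neg h]
  have hLog : ∀ x, Lof m (g x) = g x := by
    intro x
    funext j
    show (if m ≤ (j:ℕ) then 0 else g x j) = g x j
    by_cases h : m ≤ (j : ℕ)
    · rw [if_pos h, hg1 x j h]
    · rw [if_neg h]
  have hα : ∀ x, α x = Lf m u (Lof m x) + sfun (Hf m x + cvec) := by
    intro x
    show σ (τ x) = _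
    rw [hτ x, hdec (x + g x), Hf_add, hHg, add_zero, Lof_add, hLog, Lf_add, hLg x, hyfun]
    show σ (Hf m x) + (Lf m u (Lof m x) + (σ (Hf m x) + sfun (Hf m x + cvec))) = _
    rw [show σ (Hf m x) + (Lf m u (Lof m x) + (σ (Hf m x) + sfun (Hf m x + cvec)))
      = Lf m u (Lof m x) + sfun (Hf m x + cvec) + (σ (Hf m x) + σ (Hf m x)) from by abel,
      add_self, add_zero]
  have haff : ∀ x y, α (x + y) = α x + α y + α 0 := by
    intro x y
    rw [hα, hα, hα, hα, Lof_add, Hf_add, Lf_add, Lof_zero, Hf_zero, Lf_zero, zero_add,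
      zero_add, add_assoc (Hf m x) (Hf m y) cvec, hsadd (Hf m x) (Hf m y + cvec),
      hsadd (Hf m x) cvec, hsadd (Hf m y) cvec]
    funext j
    simp only [Pi.add_apply]
    have h2 : (2 : ZMod 2) = 0 := by decide
    linear_combination (-(sfun cvec j)) * h2
  -- σ = α * τ
  have hστ : permGate σ = permGate α * permGate τ := by
    have hσuse : σ = Equiv.trans τ α := by
      apply Equiv.ext
      intro a
      show σ a = σ (τ (τ a))
      rw [show τ (τ a) = a from hinv a]
    rw [permGate_mul, ← hσuse]
  obtain ⟨l, hCX, hMF⟩ := cx_decomposition m g hg1 hgH τ hτ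
  refine ⟨permGate α, 1, permGate τ, l, ⟨⟨α, rfl⟩, affine_clifford α haff⟩, ?_, hCX, hMF, ?_⟩
  · refine ⟨⟨Equiv.refl _, permGate_one.symm⟩, ?_⟩
    have h := affine_clifford (Equiv.refl (V n)) (by intro x y; show x + y = x + y + 0; rw [add_zero])
    rwa [permGate_one] at h
  · rw [mul_one, hστ]

end Aux


/-- If `π` is a permutation gate with `π Xᵢ π⁻¹ ∈ 𝒫ₙ` for `i = 1, …, m` and
`π Zⱼ π⁻¹ ∈ 𝒫ₙ` for `j = m+1, …, n`, then `π = φ₁ μ φ₂` with `φ₁, φ₂` Clifford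
permutation gates and `μ` a mismatch-free product of `C*X` gates.
(Qubit `i ∈ {1, …, n}` is the index `i - 1 : Fin n`, so `Xᵢ = xGate (Pi.single (i-1) 1)`.) -/
theorem perm_conj_X_Z_pauli_decomposition (n m : ℕ) (hn : 1 ≤ n) (hm : m ≤ n)
    (π : Gate n) (hπ : IsPermGate π)
    (hX : ∀ i : Fin n, (i : ℕ) < m → π * xGate (Pi.single i 1) * π⁻¹ ∈ PauliGroup n)
    (hZ : ∀ j : Fin n, m ≤ (j : ℕ) → π * zGate (Pi.single j 1) * π⁻¹ ∈ PauliGroup n) :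
    ∃ (φ₁ φ₂ μ : Gate n) (l : List (Finset (Fin n) × Fin n)),
      IsCliffordPerm φ₁ ∧ IsCliffordPerm φ₂ ∧
      IsCXProduct l μ ∧ MismatchFree l ∧
      π = φ₁ * μ * φ₂ := by
  classical
  obtain ⟨σ, rfl⟩ := hπ
  simp only [Aux.permGate_inv] at hX hZ
  have hXw : ∀ i : Fin n, ∃ w, (i : ℕ) < m →
      ∀ a, σ (a + Pi.single i 1) = σ a + w := by
    intro i
    by_cases hi : (i : ℕ) < m
    · have hmem := hX i hi
      rw [Aux.xGate_eq, Aux.permGate_mul, Aux.permGate_mul] at hmem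
      obtain ⟨w, hw⟩ := Aux.perm_pauli_translate _ hmem
      refine ⟨w, fun _ a => ?_⟩
      have h := hw (σ a)
      simp only [Equiv.trans_apply, Equiv.symm_apply_apply, Equiv.coe_addRight] at h
      exact h
    · exact ⟨0, fun h => absurd h hi⟩
  choose uu huu using hXw
  have hZw : ∀ j : Fin n, ∃ vj : Fin n → ZMod 2, m ≤ (j : ℕ) →
      ∀ a, (σ.symm a) j = (∑ i, vj i * a i) + (σ.symm 0) j := by
    intro j
    by_cases hj : m ≤ (j : ℕ)
    · obtain ⟨vj, hvj⟩ := Aux.zconj_linear σ j (hZ j hj)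
      exact ⟨vj, fun _ => hvj⟩
    · exact ⟨0, fun h => absurd h hj⟩
  choose vv hvv using hZw
  obtain ⟨φ₁, φ₂, μ, l, h1, h2, h3, h4, h5⟩ :=
    Aux.main_decomp m σ uu (fun i hi => huu i hi) vv (fun j hj => hvv j hj)
  exact ⟨φ₁, φ₂, μ, l, h1, h2, h3, h4, h5⟩
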